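/- (Negativity contraction.) Let C ⊆ V and C' ⊆ V' be proper cones with bases B = C ∩ {v | ⟨e,v⟩ = 1} and B' = C' ∩ {v' | ⟨e',v'⟩ = 1}, and let T : V → V' be a linear base-preserving map (T(B) ⊆ B'). Then for every v ∈ V with ⟨e,v⟩ ≥ 0: N_{B'}(T v) ≤ N_B(v) · tanh(Δ(T)/4), where tanh(∞/4) := 1. -/

import Mathlib

noncomputable section

variable {V : Type*} [NormedAddCommGroup V] [InnerProductSpace ℝ V]

/-- A proper cone: closed, convex, closed under nonnegative scaling, pointed and solid. -/
def IsProperCone (C : Set V) : Prop :=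
  IsClosed C ∧ Convex ℝ C ∧ (∀ (r : ℝ), 0 ≤ r → ∀ x ∈ C, r • x ∈ C) ∧
    (C ∩ (-C) = {0}) ∧ (Submodule.span ℝ C = ⊤)

/-- `sup_C(a/b) := inf {λ : ℝ | λ • b - a ∈ C}`, as an extended real (`⊤` if no such `λ`). -/
def supRatio (C : Set V) (a b : V) : EReal :=
  sInf ((fun l : ℝ => (l : EReal)) '' {l : ℝ | l • b - a ∈ C})

/-- `inf_C(a/b) := sup {λ : ℝ | a - λ • b ∈ C}`. -/
def infRatio (C : Set V) (a b : V) : EReal :=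
  sSup ((fun l : ℝ => (l : EReal)) '' {l : ℝ | a - l • b ∈ C})

/-- Hilbert's projective metric `h_C(a,b) = ln (sup_C(a/b) * sup_C(b/a)) ∈ [0,∞]`. -/
def hilbertDist (C : Set V) (a b : V) : EReal :=
  if supRatio C a b = ⊤ ∨ supRatio C b a = ⊤ then ⊤
  else ((Real.log ((supRatio C a b).toReal * (supRatio C b a).toReal) : ℝ) : EReal)

/-- The oscillation `osc_C(a/b) = sup_C(a/b) - inf_C(a/b)`. -/
def oscRatio (C : Set V) (a b : V) : EReal :=
  supRatio C a b - infRatio C a b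

variable {V' : Type*} [NormedAddCommGroup V'] [InnerProductSpace ℝ V']

/-- The projective diameter `Δ(T)` of a cone-preserving linear map `T`. -/
def projDiam (C : Set V) (C' : Set V') (T : V →ₗ[ℝ] V') : EReal :=
  ⨆ (a : V) (_ : a ∈ C \ {0}) (b : V) (_ : b ∈ C \ {0}), hilbertDist C' (T a) (T b)

/-- `tanh(x/4)`, with the convention `tanh(⊤/4) = 1`. -/
def tanhQuarter (x : EReal) : ℝ :=
  if x = ⊤ then 1 else Real.tanh (x.toReal / 4)

/-- `tanh(x/2)`, with the convention `tanh(⊤/2) = 1`. -/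
def tanhHalf (x : EReal) : ℝ :=
  if x = ⊤ then 1 else Real.tanh (x.toReal / 2)

/-- The dual cone of `C` (identifying `V` with its dual via the inner product). -/
def dualConeSet (C : Set V) : Set V := {w : V | ∀ c ∈ C, 0 ≤ (inner ℝ w c : ℝ)}

/-- The base norm `‖v‖_B` induced by the cone `C` and the functional `⟨e, ·⟩`. -/
def baseNorm (C : Set V) (e : V) (v : V) : ℝ :=
  sInf {r : ℝ | ∃ cp ∈ C, ∃ cm ∈ C, v = cp - cm ∧ r = (inner ℝ e cp : ℝ) + (inner ℝ e cm : ℝ)}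

/-- The negativity `N_B(v)` induced by the cone `C` and the functional `⟨e, ·⟩`. -/
def negativity (C : Set V) (e : V) (v : V) : ℝ :=
  sInf {r : ℝ | ∃ cp ∈ C, ∃ cm ∈ C, v = cp - cm ∧ r = (inner ℝ e cm : ℝ)}

namespace NegContract

lemma cone_zero_mem {C : Set V} (hC : IsProperCone C) : (0:V) ∈ C := by
  have h := hC.2.2.2.1
  have h0 : (0:V) ∈ C ∩ (-C) := by rw [h]; exact Set.mem_singleton 0
  exact h0.1

lemma cone_smul {C : Set V} (hC : IsProperCone C) {r : ℝ} (hr : 0 ≤ r) {x : V} (hx : x ∈ C) :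
    r • x ∈ C := hC.2.2.1 r hr x hx

lemma cone_add {C : Set V} (hC : IsProperCone C) {x y : V} (hx : x ∈ C) (hy : y ∈ C) :
    x + y ∈ C := by
  have h := hC.2.1 hx hy (by norm_num : (0:ℝ) ≤ 1/2) (by norm_num : (0:ℝ) ≤ 1/2) (by norm_num)
  have h2 := cone_smul hC (by norm_num : (0:ℝ) ≤ 2) h
  convert h2 using 1
  rw [smul_add, smul_smul, smul_smul]; norm_num

lemma cone_eq_zero {C : Set V} (hC : IsProperCone C) {z : V} (h1 : z ∈ C) (h2 : -z ∈ C) :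
    z = 0 := by
  have : z ∈ C ∩ (-C) := ⟨h1, Set.mem_neg.mpr h2⟩
  rw [hC.2.2.2.1] at this
  exact this

lemma exists_decomp {C : Set V} (hC : IsProperCone C) (v : V) :
    ∃ cp ∈ C, ∃ cm ∈ C, v = cp - cm := by
  let p : Submodule ℝ V :=
  { carrier := {v | ∃ cp ∈ C, ∃ cm ∈ C, v = cp - cm}
    zero_mem' := ⟨0, cone_zero_mem hC, 0, cone_zero_mem hC, by simp⟩
    add_mem' := by
      rintro a b ⟨cp, hcp, cm, hcm, rfl⟩ ⟨dp, hdp, dm, hdm, rfl⟩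
      exact ⟨cp + dp, cone_add hC hcp hdp, cm + dm, cone_add hC hcm hdm, by abel⟩
    smul_mem' := by
      rintro c a ⟨cp, hcp, cm, hcm, rfl⟩
      rcases le_or_gt 0 c with h | h
      · exact ⟨c • cp, cone_smul hC h hcp, c • cm, cone_smul hC h hcm, by rw [smul_sub]⟩
      · refine ⟨(-c) • cm, cone_smul hC (by linarith) hcm, (-c) • cp,
          cone_smul hC (by linarith) hcp, ?_⟩
        rw [smul_sub, neg_smul, neg_smul]; abel }
  have hle : Submodule.span ℝ C ≤ p :=
    Submodule.span_le.mpr (fun c hc => ⟨c, hc, 0, cone_zero_mem hC, by simp⟩)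
  rw [hC.2.2.2.2] at hle
  exact hle Submodule.mem_top

lemma inner_nonneg_of_dual {C : Set V} {e : V} (he : e ∈ interior (dualConeSet C))
    {c : V} (hc : c ∈ C) : 0 ≤ (inner ℝ e c : ℝ) :=
  (interior_subset he) c hc

lemma inner_pos_of_interior {C : Set V} {e : V} (he : e ∈ interior (dualConeSet C))
    {c : V} (hc : c ∈ C) (h0 : c ≠ 0) : 0 < (inner ℝ e c : ℝ) := by
  obtain ⟨ε, hε, hball⟩ := Metric.mem_nhds_iff.mp (mem_interior_iff_mem_nhds.mp he)
  have hcn : 0 < ‖c‖ := norm_pos_iff.mpr h0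
  set t : ℝ := ε / (2 * ‖c‖) with ht
  have htpos : 0 < t := by positivity
  have hmem : e - t • c ∈ Metric.ball e ε := by
    rw [Metric.mem_ball, dist_eq_norm]
    have : e - t • c - e = -(t • c) := by abel
    rw [this, norm_neg, norm_smul, Real.norm_eq_abs, abs_of_pos htpos, ht,
      div_mul_eq_mul_div, div_lt_iff₀ (by positivity)]
    nlinarith
  have hw : e - t • c ∈ dualConeSet C := hball hmem
  have h1 := hw c hc
  rw [inner_sub_left, real_inner_smul_left, real_inner_self_eq_norm_sq] at h1
  nlinarith [mul_pos htpos (pow_pos hcn 2)]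

section Negativity

variable {C : Set V} {e : V}

def negSet (C : Set V) (e : V) (v : V) : Set ℝ :=
  {r : ℝ | ∃ cp ∈ C, ∃ cm ∈ C, v = cp - cm ∧ r = (inner ℝ e cm : ℝ)}

lemma negativity_eq (v : V) : negativity C e v = sInf (negSet C e v) := rfl

lemma negSet_nonempty (hC : IsProperCone C) (v : V) : (negSet C e v).Nonempty := by
  obtain ⟨cp, hcp, cm, hcm, h⟩ := exists_decomp hC v
  exact ⟨_, cp, hcp, cm, hcm, h, rfl⟩

lemma negSet_bddBelow (he : e ∈ interior (dualConeSet C)) (v : V) :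
    BddBelow (negSet C e v) := by
  refine ⟨0, ?_⟩
  rintro r ⟨cp, hcp, cm, hcm, -, rfl⟩
  exact inner_nonneg_of_dual he hcm

lemma negativity_nonneg (hC : IsProperCone C) (he : e ∈ interior (dualConeSet C)) (v : V) :
    0 ≤ negativity C e v := by
  rw [negativity_eq]
  refine le_csInf (negSet_nonempty hC v) ?_
  rintro r ⟨cp, hcp, cm, hcm, -, rfl⟩
  exact inner_nonneg_of_dual he hcm

lemma negativity_le (he : e ∈ interior (dualConeSet C)) {v cp cm : V}
    (hcp : cp ∈ C) (hcm : cm ∈ C) (hd : v = cp - cm) :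
    negativity C e v ≤ (inner ℝ e cm : ℝ) :=
  csInf_le (negSet_bddBelow he v) ⟨cp, hcp, cm, hcm, hd, rfl⟩

lemma exists_decomp_lt (hC : IsProperCone C) (he : e ∈ interior (dualConeSet C)) (v : V)
    {ε : ℝ} (hε : 0 < ε) :
    ∃ cp ∈ C, ∃ cm ∈ C, v = cp - cm ∧ (inner ℝ e cm : ℝ) < negativity C e v + ε := by
  obtain ⟨r, hr, hlt⟩ := exists_lt_of_csInf_lt (negSet_nonempty hC v)
    (lt_add_of_pos_right (negativity C e v) hε)
  obtain ⟨cp, hcp, cm, hcm, hd, rfl⟩ := hr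
  exact ⟨cp, hcp, cm, hcm, hd, hlt⟩

lemma negativity_add_le (hC : IsProperCone C) (he : e ∈ interior (dualConeSet C)) (u w : V) :
    negativity C e (u + w) ≤ negativity C e u + negativity C e w := by
  refine le_of_forall_pos_le_add fun ε hε => ?_
  obtain ⟨cp, hcp, cm, hcm, hd, hlt⟩ := exists_decomp_lt hC he u (half_pos hε)
  obtain ⟨dp, hdp, dm, hdm, hd', hlt'⟩ := exists_decomp_lt hC he w (half_pos hε)
  have hdec : u + w = (cp + dp) - (cm + dm) := by rw [hd, hd']; abel
  have h := negativity_le he (cone_add hC hcp hdp) (cone_add hC hcm hdm) hdec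
  rw [inner_add_right] at h
  linarith

lemma negativity_smul_le (hC : IsProperCone C) (he : e ∈ interior (dualConeSet C))
    {n : ℝ} (hn : 0 ≤ n) (w : V) :
    negativity C e (n • w) ≤ n * negativity C e w := by
  refine le_of_forall_pos_le_add fun ε hε => ?_
  rcases eq_or_lt_of_le hn with h0 | h0
  · have h := negativity_le he (cone_zero_mem hC) (cone_zero_mem hC)
      (show n • w = 0 - 0 by rw [← h0, zero_smul, sub_zero])
    simp only [inner_zero_right] at h
    have hN := negativity_nonneg hC he w
    nlinarith
  · obtain ⟨cp, hcp, cm, hcm, hd, hlt⟩ := exists_decomp_lt hC he w (div_pos hε h0)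
    have hdec : n • w = n • cp - n • cm := by rw [hd, smul_sub]
    have h := negativity_le he (cone_smul hC hn hcp) (cone_smul hC hn hcm) hdec
    rw [real_inner_smul_right] at h
    have : n * (inner ℝ e cm : ℝ) < n * (negativity C e w + ε / n) :=
      (mul_lt_mul_iff_right₀ h0).mpr hlt
    rw [mul_add, mul_div_cancel₀ _ h0.ne'] at this
    linarith

lemma negativity_nonpos_of_mem (he : e ∈ interior (dualConeSet C)) (hC : IsProperCone C)
    {c : V} (hc : c ∈ C) : negativity C e c ≤ 0 := by
  have h := negativity_le he hc (cone_zero_mem hC) (by rw [sub_zero])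
  simpa using h

end Negativity

section Tanh

lemma tanh_formula (x : ℝ) : Real.tanh x = 1 - 2 / (Real.exp (2 * x) + 1) := by
  have h1 : Real.exp (2 * x) = Real.exp x * Real.exp x := by rw [two_mul, Real.exp_add]
  have he : (0:ℝ) < Real.exp x := Real.exp_pos x
  rw [Real.tanh_eq_sinh_div_cosh, Real.sinh_eq, Real.cosh_eq, Real.exp_neg, h1]
  have h2 : Real.exp x + (Real.exp x)⁻¹ > 0 := by positivity
  field_simp
  ring

lemma tanh_le_one (x : ℝ) : Real.tanh x ≤ 1 := by
  rw [tanh_formula]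
  have h : (0:ℝ) < Real.exp (2 * x) + 1 := by positivity
  have : 0 < 2 / (Real.exp (2 * x) + 1) := by positivity
  linarith

lemma tanh_mono {x y : ℝ} (h : x ≤ y) : Real.tanh x ≤ Real.tanh y := by
  rw [tanh_formula, tanh_formula]
  have hxy : Real.exp (2 * x) ≤ Real.exp (2 * y) := Real.exp_le_exp.mpr (by linarith)
  have hx : (0:ℝ) < Real.exp (2 * x) + 1 := by positivity
  gcongr

lemma tanh_nonneg {x : ℝ} (h : 0 ≤ x) : 0 ≤ Real.tanh x := by
  have := tanh_mono h
  rwa [Real.tanh_zero] at this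

lemma tanhQuarter_top : tanhQuarter (⊤ : EReal) = 1 := if_pos rfl

lemma tanhQuarter_coe (s : ℝ) : tanhQuarter (s : EReal) = Real.tanh (s / 4) := by
  rw [tanhQuarter, if_neg (EReal.coe_ne_top s), EReal.toReal_coe]

lemma tanhQuarter_le_one (x : EReal) : tanhQuarter x ≤ 1 := by
  rw [tanhQuarter]; split
  · exact le_refl 1
  · exact tanh_le_one _

lemma tanhQuarter_mono_of_ne_bot {x y : EReal} (hx : x ≠ ⊥) (h : x ≤ y) :
    tanhQuarter x ≤ tanhQuarter y := by
  rcases eq_or_ne y ⊤ with rfl | hy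
  · rw [tanhQuarter_top]; exact tanhQuarter_le_one x
  · have hx' : x ≠ ⊤ := by rintro rfl; exact hy (top_le_iff.mp h)
    have hy' : y ≠ ⊥ := fun hb => hx (le_bot_iff.mp (hb ▸ h))
    have ht := EReal.toReal_le_toReal h hx hy
    rw [← EReal.coe_toReal hx' hx, ← EReal.coe_toReal hy hy', tanhQuarter_coe, tanhQuarter_coe]
    exact tanh_mono (by linarith)

end Tanh

lemma hilbertDist_ne_bot (C : Set V) (a b : V) : hilbertDist C a b ≠ ⊥ := by
  rw [hilbertDist]; split
  · simp
  · exact EReal.coe_ne_bot _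

lemma supRatio_nonempty_of_ne_top {C : Set V} {a b : V} (h : supRatio C a b ≠ ⊤) :
    {l : ℝ | l • b - a ∈ C}.Nonempty := by
  by_contra h'
  rw [Set.not_nonempty_iff_eq_empty] at h'
  exact h (by rw [supRatio, h', Set.image_empty, sInf_empty])

lemma supRatio_eq_csInf {C : Set V} (hcl : IsClosed C) {a b : V}
    (hne : {l : ℝ | l • b - a ∈ C}.Nonempty) (hbd : BddBelow {l : ℝ | l • b - a ∈ C}) :
    supRatio C a b = ((sInf {l : ℝ | l • b - a ∈ C} : ℝ) : EReal) ∧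
      sInf {l : ℝ | l • b - a ∈ C} ∈ {l : ℝ | l • b - a ∈ C} := by
  have hSc : IsClosed {l : ℝ | l • b - a ∈ C} := by
    have hc : Continuous (fun l : ℝ => l • b - a) :=
      (continuous_id.smul continuous_const).sub continuous_const
    exact hcl.preimage hc
  have hmem := hSc.csInf_mem hne hbd
  refine ⟨le_antisymm ?_ ?_, hmem⟩
  · exact sInf_le ⟨_, hmem, rfl⟩
  · refine le_sInf ?_
    rintro x ⟨l, hl, rfl⟩
    exact EReal.coe_le_coe_iff.mpr (csInf_le hbd hl)

lemma key_ineq (α β r : ℝ) (hα0 : 0 < α) (hα1 : α ≤ 1) (hβ1 : 1 ≤ β) (hαβ : α < β)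
    (hr0 : 0 < r) (hβr : β = α * r ^ 4) :
    (1 - α) * (β - 1) / (β - α) ≤ (r ^ 2 - 1) / (r ^ 2 + 1) := by
  subst hβr
  rw [div_le_div_iff₀ (by linarith) (by positivity)]
  nlinarith [mul_nonneg (sq_nonneg (α * r ^ 2 - 1)) (show (0:ℝ) ≤ r ^ 2 + 1 by positivity)]


lemma core_lemma {C' : Set V} (hC' : IsProperCone C') {e' : V}
    (he' : e' ∈ interior (dualConeSet C')) {x y : V}
    (hx : x ∈ C') (hy : y ∈ C')
    (hex : (inner ℝ e' x : ℝ) = 1) (hey : (inner ℝ e' y : ℝ) = 1) :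
    negativity C' e' (x - y) ≤ tanhQuarter (hilbertDist C' x y) ∧
      0 ≤ tanhQuarter (hilbertDist C' x y) := by
  have hx0 : x ≠ 0 := by rintro rfl; rw [inner_zero_right] at hex; norm_num at hex
  by_cases htop : supRatio C' x y = ⊤ ∨ supRatio C' y x = ⊤
  · rw [hilbertDist, if_pos htop, tanhQuarter_top]
    refine ⟨?_, zero_le_one⟩
    have h := negativity_le he' hx hy rfl
    rwa [hey] at h
  · push_neg at htop
    set Sxy := {l : ℝ | l • y - x ∈ C'} with hSxy
    set Syx := {l : ℝ | l • x - y ∈ C'} with hSyx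
    have hne1 : Sxy.Nonempty := supRatio_nonempty_of_ne_top htop.1
    have hne2 : Syx.Nonempty := supRatio_nonempty_of_ne_top htop.2
    have hbd1 : BddBelow Sxy := by
      refine ⟨1, ?_⟩
      intro l hl
      have := inner_nonneg_of_dual he' hl
      rw [inner_sub_right, real_inner_smul_right, hex, hey] at this
      linarith
    have hbd2 : BddBelow Syx := by
      refine ⟨1, ?_⟩
      intro l hl
      have := inner_nonneg_of_dual he' hl
      rw [inner_sub_right, real_inner_smul_right, hex, hey] at this
      linarith
    obtain ⟨hsr1, hmem1⟩ := supRatio_eq_csInf hC'.1 hne1 hbd1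
    obtain ⟨hsr2, hmem2⟩ := supRatio_eq_csInf hC'.1 hne2 hbd2
    set β := sInf Sxy with hβdef
    set μ := sInf Syx with hμdef
    have hβ1 : 1 ≤ β := le_csInf hne1 (fun l hl => by
      have := inner_nonneg_of_dual he' hl
      rw [inner_sub_right, real_inner_smul_right, hex, hey] at this
      linarith)
    have hμ1 : 1 ≤ μ := le_csInf hne2 (fun l hl => by
      have := inner_nonneg_of_dual he' hl
      rw [inner_sub_right, real_inner_smul_right, hex, hey] at this
      linarith)
    have hβy : β • y - x ∈ C' := hmem1
    have hμx : μ • x - y ∈ C' := hmem2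
    have hHD : hilbertDist C' x y = ((Real.log (β * μ) : ℝ) : EReal) := by
      rw [hilbertDist, if_neg (by push_neg; exact htop), hsr1, hsr2,
        EReal.toReal_coe, EReal.toReal_coe]
    have hβμ1 : 1 ≤ β * μ := by
      by_contra hlt
      push_neg at hlt
      have hz : (β * μ - 1) • x ∈ C' := by
        have h1 : β • (μ • x - y) + (β • y - x) = (β * μ - 1) • x := by
          rw [smul_sub, smul_smul, sub_smul, one_smul]; abel
        rw [← h1]
        exact cone_add hC' (cone_smul hC' (by linarith) hμx) hβy
      have hz2 : -((β * μ - 1) • x) ∈ C' := by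
        have h2 : -((β * μ - 1) • x) = (1 - β * μ) • x := by
          rw [← neg_smul]; ring_nf
        rw [h2]
        exact cone_smul hC' (by linarith) hx
      have := cone_eq_zero hC' hz hz2
      rw [smul_eq_zero] at this
      rcases this with h | h
      · linarith
      · exact hx0 h
    rw [hHD, tanhQuarter_coe]
    have hμ0 : 0 < μ := by linarith
    have hβ0 : 0 < β := by linarith
    have hlog0 : 0 ≤ Real.log (β * μ) := Real.log_nonneg hβμ1
    refine ⟨?_, tanh_nonneg (by linarith)⟩
    rcases eq_or_lt_of_le hβμ1 with heq | hβμ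
    · -- β * μ = 1 : then x = y
      have hz : β • y - x = 0 := by
        apply cone_eq_zero hC' hβy
        have h2 : -(β • y - x) = β • (μ • x - y) := by
          rw [smul_sub, smul_smul, ← heq]
          rw [one_smul]; abel
        rw [h2]
        exact cone_smul hC' (by linarith) hμx
      have hxy : x = β • y := by rw [sub_eq_zero] at hz; exact hz.symm
      have hβval : β = 1 := by
        have := hex
        rw [hxy, real_inner_smul_right, hey, mul_one] at this
        exact this
      have hxyeq : x = y := by rw [hxy, hβval, one_smul]
      have hN : negativity C' e' (x - y) ≤ 0 := by
        have h := negativity_le he' (cone_zero_mem hC') (cone_zero_mem hC')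
          (show x - y = 0 - 0 by rw [hxyeq, sub_self, sub_self])
        simpa using h
      exact le_trans hN (tanh_nonneg (by linarith))
    · -- β * μ > 1
      set α := μ⁻¹ with hαdef
      have hα0 : 0 < α := by positivity
      have hα1 : α ≤ 1 := by
        rw [hαdef]
        exact inv_le_one_of_one_le₀ hμ1
      have hαβ : α < β := by
        rw [hαdef, inv_lt_iff_one_lt_mul₀ hμ0]
        linarith [mul_comm β μ]
      have hxαy : x - α • y ∈ C' := by
        have h1 : α • (μ • x - y) = x - α • y := by
          rw [smul_sub, smul_smul, inv_mul_cancel₀ hμ0.ne', one_smul]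
        rw [← h1]
        exact cone_smul hC' hα0.le hμx
      set lam := (1 - α) / (β - α) with hlam
      have hβα : 0 < β - α := by linarith
      have hlam0 : 0 ≤ lam := by
        rw [hlam]; exact div_nonneg (by linarith) hβα.le
      have hlam1 : lam ≤ 1 := by
        rw [hlam, div_le_one hβα]; linarith
      have hlamv : lam * (β - α) = 1 - α := div_mul_cancel₀ _ hβα.ne'
      set cm := lam • (β • y - x) with hcm
      set cp := (1 - lam) • (x - α • y) with hcp
      have hcmC : cm ∈ C' := cone_smul hC' hlam0 hβy
      have hcpC : cp ∈ C' := cone_smul hC' (by linarith) hxαy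
      have hdec : x - y = cp - cm := by
        rw [hcp, hcm]
        have h1 : (1 - lam) * α + lam * β = 1 := by nlinarith [hlamv]
        match_scalars <;> nlinarith [hlamv]
      have hNle : negativity C' e' (x - y) ≤ lam * (β - 1) := by
        have h := negativity_le he' hcpC hcmC hdec
        rw [hcm, real_inner_smul_right, inner_sub_right, real_inner_smul_right,
          hex, hey, mul_one] at h
        exact h
      -- now the analytic bound
      set u := Real.log (β * μ) / 4 with hu
      set r := Real.exp u with hr
      have hr0 : 0 < r := Real.exp_pos u
      have hr4 : r ^ 4 = β * μ := by
        rw [hr, ← Real.exp_nat_mul]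
        norm_num
        rw [hu]
        have : (4:ℝ) * (Real.log (β * μ) / 4) = Real.log (β * μ) := by ring
        rw [this, Real.exp_log (by positivity)]
      have hβr : β = α * r ^ 4 := by
        rw [hr4, hαdef]
        field_simp
      have hkey := key_ineq α β r hα0 hα1 hβ1 hαβ hr0 hβr
      have htanh : Real.tanh u = (r ^ 2 - 1) / (r ^ 2 + 1) := by
        have h2u : Real.exp (2 * u) = r ^ 2 := by
          rw [two_mul, Real.exp_add, hr]; ring
        rw [tanh_formula, h2u]
        have : (0:ℝ) < r ^ 2 + 1 := by positivity
        field_simp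
        ring
      have hlameq : lam * (β - 1) = (1 - α) * (β - 1) / (β - α) := by
        rw [hlam]; ring
      rw [htanh]
      calc negativity C' e' (x - y) ≤ lam * (β - 1) := hNle
        _ = (1 - α) * (β - 1) / (β - α) := hlameq
        _ ≤ (r ^ 2 - 1) / (r ^ 2 + 1) := hkey

end NegContract

open NegContract

/-- **Negativity contraction.** -/
theorem negativity_contraction
    {V : Type*} [NormedAddCommGroup V] [InnerProductSpace ℝ V] [FiniteDimensional ℝ V]
    {V' : Type*} [NormedAddCommGroup V'] [InnerProductSpace ℝ V'] [FiniteDimensional ℝ V']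
    (C : Set V) (C' : Set V') (hC : IsProperCone C) (hC' : IsProperCone C')
    (e : V) (he : e ∈ interior (dualConeSet C))
    (e' : V') (he' : e' ∈ interior (dualConeSet C'))
    (B : Set V) (hB : B = C ∩ {v : V | (inner ℝ e v : ℝ) = 1})
    (B' : Set V') (hB' : B' = C' ∩ {v : V' | (inner ℝ e' v : ℝ) = 1})
    (T : V →ₗ[ℝ] V') (hT : ∀ b ∈ B, T b ∈ B')
    (v : V) (hv : 0 ≤ (inner ℝ e v : ℝ)) :
    negativity C' e' (T v) ≤ negativity C e v * tanhQuarter (projDiam C C' T) := by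
  classical
  have hNnn : 0 ≤ negativity C e v := negativity_nonneg hC he v
  refine le_of_forall_pos_le_add fun ε hε => ?_
  obtain ⟨cp, hcp, cm, hcm, hdec, hlt⟩ := exists_decomp_lt hC he v hε
  set n := (inner ℝ e cm : ℝ) with hn
  have hn0 : 0 ≤ n := inner_nonneg_of_dual he hcm
  have hNlen : negativity C e v ≤ n := negativity_le he hcp hcm hdec
  set p := (inner ℝ e cp : ℝ) with hp
  have hprel : p = (inner ℝ e v : ℝ) + n := by
    have h := congrArg (fun w => (inner ℝ e w : ℝ)) hdec
    simp only [inner_sub_right] at h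
    rw [hp, hn]; linarith
  rcases eq_or_lt_of_le hn0 with h0 | h0
  · -- n = 0
    have hcm0 : cm = 0 := by
      by_contra hne
      have hpos := inner_pos_of_interior he hcm hne
      rw [← hn] at hpos
      linarith
    have hN0 : negativity C e v = 0 := le_antisymm (by linarith) hNnn
    have hTv : negativity C' e' (T v) ≤ 0 := by
      have hvcp : v = cp := by rw [hdec, hcm0, sub_zero]
      rcases eq_or_ne cp 0 with hcpz | hcpz
      · have hz : T v = 0 - 0 := by rw [hvcp, hcpz, map_zero, sub_zero]
        have h := negativity_le he' (cone_zero_mem hC') (cone_zero_mem hC') hz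
        simpa using h
      · have hq : 0 < p := by rw [hp]; exact inner_pos_of_interior he hcp hcpz
        have hmemB : p⁻¹ • cp ∈ B := by
          rw [hB]
          refine ⟨cone_smul hC (by positivity) hcp, ?_⟩
          simp only [Set.mem_setOf_eq, real_inner_smul_right]
          rw [← hp]
          exact inv_mul_cancel₀ hq.ne'
        have hTB := hT _ hmemB
        rw [hB'] at hTB
        have hTcp : T v ∈ C' := by
          have heq : T v = p • T (p⁻¹ • cp) := by
            rw [← map_smul, smul_inv_smul₀ hq.ne', hvcp]
          rw [heq]
          exact cone_smul hC' hq.le hTB.1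
        have h := negativity_le he' hTcp (cone_zero_mem hC') (by rw [sub_zero])
        simpa using h
    rw [hN0, zero_mul, zero_add]
    linarith
  · -- 0 < n
    have hppos : 0 < p := by linarith
    have haC : p⁻¹ • cp ∈ C := cone_smul hC (by positivity) hcp
    have hbC : n⁻¹ • cm ∈ C := cone_smul hC (by positivity) hcm
    have hainner : (inner ℝ e (p⁻¹ • cp) : ℝ) = 1 := by
      rw [real_inner_smul_right, ← hp]; exact inv_mul_cancel₀ hppos.ne'
    have hbinner : (inner ℝ e (n⁻¹ • cm) : ℝ) = 1 := by
      rw [real_inner_smul_right, ← hn]; exact inv_mul_cancel₀ h0.ne'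
    have haB : p⁻¹ • cp ∈ B := by rw [hB]; exact ⟨haC, hainner⟩
    have hbB : n⁻¹ • cm ∈ B := by rw [hB]; exact ⟨hbC, hbinner⟩
    have hTa := hT _ haB; rw [hB'] at hTa
    have hTb := hT _ hbB; rw [hB'] at hTb
    have ha0 : p⁻¹ • cp ≠ 0 := by
      intro hz; rw [hz, inner_zero_right] at hainner; norm_num at hainner
    have hb0 : n⁻¹ • cm ≠ 0 := by
      intro hz; rw [hz, inner_zero_right] at hbinner; norm_num at hbinner
    have hcore := core_lemma hC' he' hTa.1 hTb.1 hTa.2 hTb.2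
    have hdle : hilbertDist C' (T (p⁻¹ • cp)) (T (n⁻¹ • cm)) ≤ projDiam C C' T := by
      have haD : p⁻¹ • cp ∈ C \ {0} := ⟨haC, by simp [ha0]⟩
      have hbD : n⁻¹ • cm ∈ C \ {0} := ⟨hbC, by simp [hb0]⟩
      exact le_trans
        (le_iSup₂ (f := fun (b' : V) (_ : b' ∈ C \ {0}) =>
          hilbertDist C' (T (p⁻¹ • cp)) (T b')) _ hbD)
        (le_iSup₂ (f := fun (a' : V) (_ : a' ∈ C \ {0}) =>
          ⨆ (b' : V) (_ : b' ∈ C \ {0}), hilbertDist C' (T a') (T b')) _ haD)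
    have htle : tanhQuarter (hilbertDist C' (T (p⁻¹ • cp)) (T (n⁻¹ • cm)))
        ≤ tanhQuarter (projDiam C C' T) :=
      tanhQuarter_mono_of_ne_bot (hilbertDist_ne_bot _ _ _) hdle
    have hTveq : T v = n • (T (p⁻¹ • cp) - T (n⁻¹ • cm)) + (inner ℝ e v : ℝ) • T (p⁻¹ • cp) := by
      have h1 : T cp = p • T (p⁻¹ • cp) := by rw [← map_smul, smul_inv_smul₀ hppos.ne']
      have h2 : T cm = n • T (n⁻¹ • cm) := by rw [← map_smul, smul_inv_smul₀ h0.ne']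
      set m := (inner ℝ e v : ℝ) with hm
      rw [hdec, map_sub, h1, h2, hprel]
      module
    calc negativity C' e' (T v)
        ≤ negativity C' e' (n • (T (p⁻¹ • cp) - T (n⁻¹ • cm)))
            + negativity C' e' ((inner ℝ e v : ℝ) • T (p⁻¹ • cp)) := by
          rw [hTveq]; exact negativity_add_le hC' he' _ _
      _ ≤ n * negativity C' e' (T (p⁻¹ • cp) - T (n⁻¹ • cm)) + 0 :=
          add_le_add (negativity_smul_le hC' he' h0.le _)
            (negativity_nonpos_of_mem he' hC' (cone_smul hC' hv hTa.1))
      _ ≤ n * tanhQuarter (hilbertDist C' (T (p⁻¹ • cp)) (T (n⁻¹ • cm))) + 0 :=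
          add_le_add_left (mul_le_mul_of_nonneg_left hcore.1 h0.le) 0
      _ ≤ (negativity C e v + ε) * tanhQuarter (hilbertDist C' (T (p⁻¹ • cp)) (T (n⁻¹ • cm)))
            + 0 :=
          add_le_add_left (mul_le_mul_of_nonneg_right (by linarith) hcore.2) 0
      _ ≤ (negativity C e v + ε) * tanhQuarter (projDiam C C' T) + 0 :=
          add_le_add_left (mul_le_mul_of_nonneg_left htle (by linarith)) 0
      _ ≤ negativity C e v * tanhQuarter (projDiam C C' T) + ε := by
          nlinarith [tanhQuarter_le_one (projDiam C C' T)]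


end
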